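/- In the down-up algebra A(α,β,0) with r₁ ≠ 0, for all k ≥ 0 one has d^k·u = (φ_{k-1}/r₁)·w₁·d^{k-1} + r₂^k·u·d^k. -/

import Mathlib

noncomputable section

open FreeAlgebra

/-- The defining relations of the down-up algebra `A(α,β,γ)`:
generator `0` is `u`, generator `1` is `d`. -/
inductive DownUpRel (K : Type) [Field K] (α β γ : K) :
    FreeAlgebra K (Fin 2) → FreeAlgebra K (Fin 2) → Prop
  | rel1 : DownUpRel K α β γ
      (ι K 1 * ι K 1 * ι K 0)
      (α • (ι K 1 * ι K 0 * ι K 1) + β • (ι K 0 * ι K 1 * ι K 1) + γ • ι K 1)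
  | rel2 : DownUpRel K α β γ
      (ι K 1 * ι K 0 * ι K 0)
      (α • (ι K 0 * ι K 1 * ι K 0) + β • (ι K 0 * ι K 0 * ι K 1) + γ • ι K 0)

/-- The down-up algebra `A(α,β,γ)` of Benkart–Roby. -/
abbrev DownUp (K : Type) [Field K] (α β γ : K) : Type :=
  RingQuot (DownUpRel K α β γ)

/-- The generator `u` of the down-up algebra. -/
def DownUp.u (K : Type) [Field K] (α β γ : K) : DownUp K α β γ :=
  RingQuot.mkAlgHom K _ (ι K 0)

/-- The generator `d` of the down-up algebra. -/
def DownUp.d (K : Type) [Field K] (α β γ : K) : DownUp K α β γ :=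
  RingQuot.mkAlgHom K _ (ι K 1)

/-- `φ_p = ∑_{i=0}^p r₁^i r₂^(p-i)`. -/
def phi (K : Type) [Field K] (r₁ r₂ : K) (p : ℕ) : K :=
  ∑ i ∈ Finset.range (p + 1), r₁ ^ i * r₂ ^ (p - i)

/-- `φ_{k-1}`, with the convention `φ_{-1} = 0` (for `k = 0`). -/
def phiPred (K : Type) [Field K] (r₁ r₂ : K) (k : ℕ) : K :=
  if k = 0 then 0 else phi K r₁ r₂ (k - 1)


lemma phi_succ (K : Type) [Field K] (r₁ r₂ : K) (p : ℕ) :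
    phi K r₁ r₂ (p + 1) = r₂ ^ (p + 1) + r₁ * phi K r₁ r₂ p := by
  unfold phi
  rw [Finset.sum_range_succ']
  simp only [Nat.succ_sub_succ, pow_succ', pow_zero, one_mul, Nat.sub_zero,
    Finset.mul_sum]
  rw [add_comm]
  simp [mul_assoc]

set_option linter.unnecessarySeqFocus false in
/-- In `A(α,β,0)` with `r₁ ≠ 0`:
`d^k·u = (φ_{k-1}/r₁)·w₁·d^{k-1} + r₂^k·u·d^k` for all `k ≥ 0`. -/
theorem downUp_d_pow_mul_u (K : Type) [Field K] [CharZero K] (α β r₁ r₂ : K)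
    (hr₁ : r₁ ≠ 0) (hsum : α = r₁ + r₂) (hprod : β = -(r₁ * r₂)) :
    let u := DownUp.u K α β 0
    let d := DownUp.d K α β 0
    let w₁ := β • (u * d) + r₁ • (d * u)
    ∀ k : ℕ,
      d ^ k * u =
        (phiPred K r₁ r₂ k / r₁) • (w₁ * d ^ (k - 1)) + r₂ ^ k • (u * d ^ k) := by
  intro u d w₁
  have hw : w₁ = β • (u * d) + r₁ • (d * u) := rfl
  have hrel : d * (d * u) = α • (d * (u * d)) + β • (u * (d * d)) := by
    have h := RingQuot.mkAlgHom_rel K (DownUpRel.rel1 (K := K) (α := α) (β := β) (γ := 0))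
    simp only [map_add, map_mul, map_smul, zero_smul, add_zero] at h
    simpa [u, d, DownUp.u, DownUp.d, mul_assoc] using h
  have hdu : d * u = (1 / r₁) • w₁ + r₂ • (u * d) := by
    rw [hw]
    subst hsum hprod
    match_scalars <;> field_simp <;> ring
  have hdw : d * w₁ = r₁ • (w₁ * d) := by
    rw [hw]
    simp only [mul_add, add_mul, smul_mul_assoc, mul_smul_comm, hrel, smul_add, smul_smul,
      mul_assoc]
    subst hsum hprod
    match_scalars <;> ring
  intro k
  induction k with
  | zero => simp [phiPred]
  | succ k ih =>
    have hk1 : d ^ (k + 1) * u =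
        (phiPred K r₁ r₂ (k + 1) / r₁) • (w₁ * d ^ k) + r₂ ^ (k + 1) • (u * d ^ (k + 1)) := by
      match k with
      | 0 =>
        simpa [phiPred, phi, pow_one] using hdu
      | m + 1 =>
        calc d ^ (m + 2) * u = d * (d ^ (m + 1) * u) := by
              rw [pow_succ', mul_assoc]
          _ = d * ((phiPred K r₁ r₂ (m + 1) / r₁) • (w₁ * d ^ m)
                + r₂ ^ (m + 1) • (u * d ^ (m + 1))) := by
              simp only [Nat.add_sub_cancel] at ih; rw [ih]
          _ = _ := by
              have h1 : d * (w₁ * d ^ m) = r₁ • (w₁ * d ^ (m + 1)) := by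
                rw [← mul_assoc, hdw, smul_mul_assoc, mul_assoc, ← pow_succ']
              have h2 : d * (u * d ^ (m + 1)) = (1 / r₁) • (w₁ * d ^ (m + 1))
                  + r₂ • (u * d ^ (m + 2)) := by
                rw [← mul_assoc, hdu, add_mul, smul_mul_assoc, smul_mul_assoc,
                  mul_assoc, ← pow_succ']
              have hphi : phiPred K r₁ r₂ (m + 2) =
                  r₂ ^ (m + 1) + r₁ * phiPred K r₁ r₂ (m + 1) := by
                simp [phiPred, phi_succ]
              rw [mul_add, mul_smul_comm, mul_smul_comm, h1, h2, smul_add, smul_smul,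
                smul_smul, smul_smul, hphi, show m + 1 + 1 = m + 2 from rfl]
              match_scalars <;> field_simp <;> ring
    simpa using hk1
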